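/- If f is a nested canalizing function with most dominant canalizing variable π(1) = i, canalizing input value α_1, and canalized output value β_1, then as(f) = (1/2)·(as(f^{(i,-α_1)}) + 1 - f̂^{(i,-α_1)}(∅)·β_1). -/

import Mathlib

open Finset

/-- Sign encoding of a Boolean value: `true ↦ 1`, `false ↦ -1`. -/
def bsign (a : Bool) : ℝ := if a then 1 else -1

/-- The character `χ_U(x) = ∏_{i ∈ U} x_i` (inputs encoded as Booleans). -/
def chi {n : ℕ} (U : Finset (Fin n)) (x : Fin n → Bool) : ℝ :=
  ∏ i ∈ U, bsign (x i)

/-- Fourier coefficient `f̂(U) = 2^{-n} ∑_x f(x) χ_U(x)`. -/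
noncomputable def fhat {n : ℕ} (f : (Fin n → Bool) → ℝ) (U : Finset (Fin n)) : ℝ :=
  (∑ x : Fin n → Bool, f x * chi U x) / 2 ^ n

/-- `f` is a (±1-valued) Boolean function. -/
def IsBoolean {n : ℕ} (f : (Fin n → Bool) → ℝ) : Prop := ∀ x, f x = 1 ∨ f x = -1

/-- Restriction `f^{(i,a)}` of `f` obtained by fixing the `i`-th input to `a`. -/
def restrict {n : ℕ} (f : (Fin n → Bool) → ℝ) (i : Fin n) (a : Bool) :
    (Fin n → Bool) → ℝ :=
  fun x => f (Function.update x i a)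

/-- Variable `i` is relevant for `f`. -/
def relevant {n : ℕ} (f : (Fin n → Bool) → ℝ) (i : Fin n) : Prop :=
  ∃ x, f x ≠ f (Function.update x i (!(x i)))

/-- Number of relevant variables of `f`. -/
noncomputable def numRel {n : ℕ} (f : (Fin n → Bool) → ℝ) : ℕ :=
  Nat.card {i : Fin n // relevant f i}

/-- Influence `I_i(f) = Pr[f(X) ≠ f(X ⊕ e_i)]` for uniform `X`. -/
noncomputable def influence {n : ℕ} (f : (Fin n → Bool) → ℝ) (i : Fin n) : ℝ :=
  (Nat.card {x : Fin n → Bool // f x ≠ f (Function.update x i (!(x i)))} : ℝ) / 2 ^ n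

/-- Average sensitivity `as(f) = ∑_i I_i(f)`. -/
noncomputable def avgSens {n : ℕ} (f : (Fin n → Bool) → ℝ) : ℝ :=
  ∑ i : Fin n, influence f i

/-- `IsNCFwith f L` : `f` is a nested canalizing function with the nested canalizing
structure recorded by the list `L` of triples `(π(j), α_j, β_j)`: fixing variable
`π(j)` to its canalizing value `α_j` forces the output `β_j`, and the restriction to
the non-canalizing value continues with the rest of the list; the base case is a
constant (±1) function. -/
inductive IsNCFwith : {n : ℕ} → ((Fin n → Bool) → ℝ) → List (Fin n × Bool × ℝ) → Prop where
  | const {n : ℕ} (f : (Fin n → Bool) → ℝ) (b : ℝ) (hb : b = 1 ∨ b = -1)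
      (h : ∀ x, f x = b) : IsNCFwith f []
  | step {n : ℕ} (f : (Fin n → Bool) → ℝ) (i : Fin n) (a : Bool) (b : ℝ)
      (hb : b = 1 ∨ b = -1) (L : List (Fin n × Bool × ℝ))
      (hrel : relevant f i)
      (hcan : ∀ x, x i = a → f x = b)
      (hrest : IsNCFwith (restrict f i (!a)) L) :
      IsNCFwith f ((i, a, b) :: L)

/-- `f` is a nested canalizing function. -/
def IsNCF {n : ℕ} (f : (Fin n → Bool) → ℝ) : Prop := ∃ L, IsNCFwith f L

/-- Variable `i` is most dominant: some nested canalizing ordering starts with `i`. -/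
def MostDominant {n : ℕ} (f : (Fin n → Bool) → ℝ) (i : Fin n) : Prop :=
  ∃ a b L, IsNCFwith f ((i, a, b) :: L)

/-- The canalized output values `β_1, β_2, …` recorded in `L` alternate in sign. -/
def AltBetas {n : ℕ} (L : List (Fin n × Bool × ℝ)) : Prop :=
  List.Chain' (fun p q : Fin n × Bool × ℝ => q.2.2 = -p.2.2) L

section Aux
variable {n : ℕ}

lemma card_subtype_real (P : (Fin n → Bool) → Prop) [DecidablePred P] :
    (Nat.card {x : Fin n → Bool // P x} : ℝ)
      = ∑ x : Fin n → Bool, if P x then (1:ℝ) else 0 := by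
  classical
  rw [Nat.card_eq_fintype_card, Fintype.card_subtype, Finset.card_filter]
  push_cast
  rfl

lemma sum_split_tf (i : Fin n) (h : (Fin n → Bool) → ℝ) :
    2 * ∑ x : Fin n → Bool, h x
      = (∑ x : Fin n → Bool, h (Function.update x i true))
        + ∑ x : Fin n → Bool, h (Function.update x i false) := by
  have hinv : Function.Involutive
      (fun x : Fin n → Bool => Function.update x i (!(x i))) := by
    intro x
    simp [Function.update_idem, Function.update_self, Bool.not_not,
      Function.update_eq_self]
  have h1 : ∑ x : Fin n → Bool, h (Function.update x i (!(x i)))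
      = ∑ x : Fin n → Bool, h x :=
    Equiv.sum_comp hinv.toPerm h
  have key : ∀ x : Fin n → Bool,
      h x + h (Function.update x i (!(x i)))
        = h (Function.update x i true) + h (Function.update x i false) := by
    intro x
    have hx1 : Function.update x i (x i) = x := Function.update_eq_self i x
    cases hx : x i
    · rw [hx] at hx1
      rw [show x = Function.update x i false from hx1.symm]
      simp [Function.update_idem]
      ring
    · rw [hx] at hx1
      rw [show x = Function.update x i true from hx1.symm]
      simp [Function.update_idem]
  calc 2 * ∑ x : Fin n → Bool, h x
      = ∑ x : Fin n → Bool, h x + ∑ x : Fin n → Bool, h (Function.update x i (!(x i))) := by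
        rw [h1]; ring
    _ = ∑ x : Fin n → Bool, (h (Function.update x i true) + h (Function.update x i false)) := by
        rw [← Finset.sum_add_distrib]
        exact Finset.sum_congr rfl (fun x _ => key x)
    _ = _ := Finset.sum_add_distrib

lemma sum_split (i : Fin n) (a : Bool) (h : (Fin n → Bool) → ℝ) :
    2 * ∑ x : Fin n → Bool, h x
      = (∑ x : Fin n → Bool, h (Function.update x i a))
        + ∑ x : Fin n → Bool, h (Function.update x i (!a)) := by
  cases a
  · rw [sum_split_tf i h]; simp; ring
  · rw [sum_split_tf i h]; simp

end Aux

lemma IsNCFwith.isBoolean {n : ℕ} {f : (Fin n → Bool) → ℝ} {L : List (Fin n × Bool × ℝ)}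
    (h : IsNCFwith f L) : IsBoolean f := by
  induction h with
  | const f b hb hfb => intro x; rw [hfb x]; exact hb
  | step f i a b hb L hrel hcan hrest ih =>
      intro x
      by_cases hxa : x i = a
      · rw [hcan x hxa]; exact hb
      · have hx : x i = !a := by cases hxi : x i <;> cases a <;> simp_all
        have hfx : f x = _root_.restrict f i (!a) x := by
          unfold _root_.restrict
          rw [← hx, Function.update_eq_self]
        rw [hfx]; exact ih x

theorem avgSens_ncf_recursion {n : ℕ} (f : (Fin n → Bool) → ℝ)
    (i : Fin n) (a : Bool) (b : ℝ) (L : List (Fin n × Bool × ℝ))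
    (hf : IsNCFwith f ((i, a, b) :: L)) :
    avgSens f = (1 / 2) * (avgSens (restrict f i (!a)) + 1
      - fhat (restrict f i (!a)) ∅ * b) := by
  classical
  obtain ⟨hb, hrel, hcan, hrest⟩ :
      (b = 1 ∨ b = -1) ∧ relevant f i ∧ (∀ x, x i = a → f x = b) ∧
        IsNCFwith (_root_.restrict f i (!a)) L := by
    cases hf with
    | step _ _ _ _ hb _ hrel hcan hrest => exact ⟨hb, hrel, hcan, hrest⟩
  set g := restrict f i (!a) with hg
  have hgbool : IsBoolean g := hrest.isBoolean
  have hpow : (2:ℝ) ^ n ≠ 0 := by positivity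
  have hgind : ∀ (x : Fin n → Bool) (c : Bool), g (Function.update x i c) = g x := by
    intro x c
    simp only [hg, _root_.restrict, Function.update_idem]
  have hfg : ∀ x : Fin n → Bool, f (Function.update x i (!a)) = g x := fun _ => rfl
  -- influence of `f` in a coordinate `j ≠ i` is half the influence of `g`
  have hinfj : ∀ j : Fin n, j ≠ i → 2 * influence f j = influence g j := by
    intro j hji
    have key : 2 * ∑ x : Fin n → Bool,
        (if f x ≠ f (Function.update x j (!(x j))) then (1:ℝ) else 0)
        = ∑ x : Fin n → Bool,
            (if g x ≠ g (Function.update x j (!(x j))) then (1:ℝ) else 0) := by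
      rw [sum_split i a
        (fun x => if f x ≠ f (Function.update x j (!(x j))) then (1:ℝ) else 0)]
      have h1 : ∀ x : Fin n → Bool,
          (if f (Function.update x i a) ≠
              f (Function.update (Function.update x i a) j
                (!(Function.update x i a j))) then (1:ℝ) else 0) = 0 := by
        intro x
        have e1 : f (Function.update x i a) = b :=
          hcan _ (Function.update_self i a x)
        have e2 : f (Function.update (Function.update x i a) j
            (!(Function.update x i a j))) = b := by
          apply hcan
          rw [Function.update_of_ne hji.symm, Function.update_self]
        simp [e1, e2]
      have h2 : ∀ x : Fin n → Bool,
          (if f (Function.update x i (!a)) ≠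
              f (Function.update (Function.update x i (!a)) j
                (!(Function.update x i (!a) j))) then (1:ℝ) else 0)
            = (if g x ≠ g (Function.update x j (!(x j))) then (1:ℝ) else 0) := by
        intro x
        have e1 : f (Function.update x i (!a)) = g x := hfg x
        have e2 : f (Function.update (Function.update x i (!a)) j
            (!(Function.update x i (!a) j))) = g (Function.update x j (!(x j))) := by
          rw [Function.update_of_ne hji, Function.update_comm (Ne.symm hji)]
          exact hfg _
        rw [e1, e2]
      simp only [h1, h2, Finset.sum_const_zero, zero_add]
    unfold influence
    rw [card_subtype_real, card_subtype_real]
    rw [← mul_div_assoc, key]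
  -- influence of `g` in coordinate `i` is zero
  have hgi0 : influence g i = 0 := by
    unfold influence
    rw [card_subtype_real]
    simp [hgind]
  -- influence of `f` in coordinate `i`
  have hfhat : fhat g ∅ = (∑ x : Fin n → Bool, g x) / 2 ^ n := by
    simp [fhat, chi]
  have hinfi : influence f i = (1 - fhat g ∅ * b) / 2 := by
    have hPiff : ∀ x : Fin n → Bool,
        (f x ≠ f (Function.update x i (!(x i)))) ↔ g x ≠ b := by
      intro x
      by_cases hxa : x i = a
      · have h1 : f x = b := hcan x hxa
        have h2 : f (Function.update x i (!(x i))) = g x := by rw [hxa]; exact hfg x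
        rw [h1, h2]; exact ne_comm
      · have hx : x i = !a := by cases hxi : x i <;> cases a <;> simp_all
        have h1 : f x = g x := by
          rw [← hfg x]
          congr 1
          rw [← hx, Function.update_eq_self]
        have h2 : f (Function.update x i (!(x i))) = b := by
          apply hcan
          rw [Function.update_self, hx, Bool.not_not]
        rw [h1, h2]
    have hpt : ∀ x : Fin n → Bool,
        (if g x ≠ b then (1:ℝ) else 0) = (1 - g x * b) / 2 := by
      intro x
      rcases hgbool x with h1 | h1 <;> rcases hb with h2 | h2 <;>
        simp [h1, h2] <;> norm_num
    have hcardfun : (Finset.univ : Finset (Fin n → Bool)).card = 2 ^ n := by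
      simp [Finset.card_univ]
    have hsum : ∑ x : Fin n → Bool, (if g x ≠ b then (1:ℝ) else 0)
        = ((2:ℝ) ^ n - (∑ x : Fin n → Bool, g x) * b) / 2 := by
      rw [Finset.sum_congr rfl (fun x _ => hpt x), ← Finset.sum_div]
      congr 1
      rw [Finset.sum_sub_distrib, ← Finset.sum_mul]
      congr 1
      rw [Finset.sum_const, hcardfun]
      ring
    unfold influence
    rw [card_subtype_real]
    simp only [hPiff]
    rw [hsum, hfhat]
    field_simp
  -- put everything together
  unfold avgSens
  rw [← Finset.add_sum_erase _ _ (Finset.mem_univ i)]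
  have hrest' : ∑ j ∈ Finset.univ.erase i, influence f j
      = ∑ j ∈ Finset.univ.erase i, influence g j / 2 := by
    refine Finset.sum_congr rfl (fun j hj => ?_)
    have hji : j ≠ i := (Finset.mem_erase.1 hj).1
    have := hinfj j hji
    linarith
  have hsplit : ∑ j ∈ Finset.univ.erase i, influence g j / 2
      = ((∑ j : Fin n, influence g j) - influence g i) / 2 := by
    rw [← Finset.sum_div]
    congr 1
    rw [← Finset.add_sum_erase _ _ (Finset.mem_univ i)]
    ring
  rw [hrest', hinfi, hsplit, hgi0]
  ring
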